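/- arXiv:2306.06250 — 2 statements merged into one kernel-verified Lean document; each statement's English description precedes it below -/
import Mathlib

section
/- Let d ≥ 2 and δ ∈ (0,1). Let A = {x ∈ ℝ^d : ‖x‖₂ ≤ 1, x₁ ≥ δ} be the spherical cap at height δ and H = {x ∈ ℝ^d : ‖x‖₂ ≤ 1, x₁ ≥ 0} the upper half of the unit ball. Then vol(A)/vol(H) ≥ ( (1−δ)^{(d+1)/2} / (√π · (d+1)) ) · Γ(d/2 + 1) / Γ(d/2 + 1/2), where vol denotes d-dimensional Lebesgue measure and Γ is the Gamma function. -/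
open MeasureTheory

section CapAux

/-- Evaluation at a coordinate is measurable on Euclidean space. -/
lemma capaux_measurable_eval (m : ℕ) (i : Fin m) :
    Measurable fun x : EuclideanSpace ℝ (Fin m) => x i :=
  (measurable_pi_apply i).comp (MeasurableEquiv.toLp 2 (Fin m → ℝ)).symm.measurable

/-- The hyperplane `{x | x i = 0}` has measure zero. -/
lemma capaux_hyperplane_zero (m : ℕ) (i : Fin (m + 2)) :
    volume {x : EuclideanSpace ℝ (Fin (m + 2)) | x i = 0} = 0 := by
  set K : Submodule ℝ (EuclideanSpace ℝ (Fin (m + 2))) :=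
    { carrier := {x | x i = 0}
      add_mem' := by
        intro a b ha hb
        simp only [Set.mem_setOf_eq] at *
        simp [PiLp.add_apply, ha, hb]
      zero_mem' := by simp [Set.mem_setOf_eq]
      smul_mem' := by
        intro c a ha
        simp only [Set.mem_setOf_eq] at *
        simp [PiLp.smul_apply, ha] } with hK
  have hKne : K ≠ ⊤ := by
    intro h
    have h1 : (EuclideanSpace.single i (1 : ℝ)) ∈ K := h ▸ Submodule.mem_top
    have : (EuclideanSpace.single i (1 : ℝ)) i = 0 := h1
    rw [EuclideanSpace.single_apply] at this
    simp at this
  have := Measure.addHaar_submodule (volume : Measure (EuclideanSpace ℝ (Fin (m + 2)))) K hKne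
  exact this

/-- The volume of the half ball is half the volume of the ball. -/
lemma capaux_half_ball (m : ℕ) (i : Fin (m + 2)) :
    2 * volume {x : EuclideanSpace ℝ (Fin (m + 2)) | ‖x‖ ≤ 1 ∧ 0 ≤ x i} =
      volume (Metric.closedBall (0 : EuclideanSpace ℝ (Fin (m + 2))) 1) := by
  set H := {x : EuclideanSpace ℝ (Fin (m + 2)) | ‖x‖ ≤ 1 ∧ 0 ≤ x i} with hH
  set N := {x : EuclideanSpace ℝ (Fin (m + 2)) | ‖x‖ ≤ 1 ∧ x i ≤ 0} with hN
  have hHball : H = Metric.closedBall 0 1 ∩ {x | 0 ≤ x i} := by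
    ext x; simp [hH, Metric.mem_closedBall, dist_zero_right]
  have hNball : N = Metric.closedBall 0 1 ∩ {x | x i ≤ 0} := by
    ext x; simp [hN, Metric.mem_closedBall, dist_zero_right]
  have hmeasH : MeasurableSet H := by
    rw [hHball]
    exact Metric.isClosed_closedBall.measurableSet.inter
      (measurableSet_le measurable_const (capaux_measurable_eval _ i))
  have hmeasN : MeasurableSet N := by
    rw [hNball]
    exact Metric.isClosed_closedBall.measurableSet.inter
      (measurableSet_le (capaux_measurable_eval _ i) measurable_const)
  -- N is the preimage of H under negation, hence same volume
  have hNH : N = (((-1 : ℝ) • ·)) ⁻¹' H := by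
    ext x
    simp only [hH, hN, Set.mem_setOf_eq, Set.mem_preimage]
    have hnorm : ‖(-1 : ℝ) • x‖ = ‖x‖ := by
      rw [norm_smul]; simp
    have happ : ((-1 : ℝ) • x) i = -(x i) := by
      simp [PiLp.smul_apply]
    rw [hnorm, happ]
    constructor
    · rintro ⟨h1, h2⟩; exact ⟨h1, by linarith⟩
    · rintro ⟨h1, h2⟩; exact ⟨h1, by linarith⟩
  have hvolNH : volume N = volume H := by
    rw [hNH, Measure.addHaar_preimage_smul _ (by norm_num : (-1 : ℝ) ≠ 0)]
    have : |((-1 : ℝ) ^ Module.finrank ℝ (EuclideanSpace ℝ (Fin (m + 2))))⁻¹| = 1 := by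
      rcases neg_one_pow_eq_or ℝ (Module.finrank ℝ (EuclideanSpace ℝ (Fin (m + 2)))) with h | h <;>
        rw [h] <;> norm_num
    rw [this]
    simp
  have hunion : H ∪ N = Metric.closedBall 0 1 := by
    ext x
    simp only [hH, hN, Set.mem_union, Set.mem_setOf_eq, Metric.mem_closedBall, dist_zero_right]
    constructor
    · rintro (⟨h, _⟩ | ⟨h, _⟩) <;> exact h
    · intro h
      rcases le_total 0 (x i) with h' | h'
      · exact Or.inl ⟨h, h'⟩
      · exact Or.inr ⟨h, h'⟩
  have hinter : volume (H ∩ N) = 0 := by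
    have hsub : H ∩ N ⊆ {x : EuclideanSpace ℝ (Fin (m + 2)) | x i = 0} := by
      rintro x ⟨⟨_, h1⟩, ⟨_, h2⟩⟩
      exact le_antisymm h2 h1
    exact measure_mono_null hsub (capaux_hyperplane_zero m i)
  have key : volume (H ∪ N) + volume (H ∩ N) = volume H + volume N :=
    measure_union_add_inter H hmeasN
  rw [hunion, hinter, add_zero, hvolNH] at key
  rw [two_mul, key]

/-- Volume of a cylinder `[a,b] × closedBall r` inside Euclidean space. -/
lemma capaux_cylinder_vol (m : ℕ) (a b r : ℝ) (hr : 0 ≤ r) :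
    volume {x : EuclideanSpace ℝ (Fin (m + 2)) |
        (a ≤ x 0 ∧ x 0 ≤ b) ∧
          ∑ j : Fin (m + 1), x ((0 : Fin (m + 2)).succAbove j) ^ 2 ≤ r ^ 2} =
      ENNReal.ofReal (b - a) *
        volume (Metric.closedBall (0 : EuclideanSpace ℝ (Fin (m + 1))) r) := by
  set T : Set (Fin (m + 1) → ℝ) := {y | ∑ j, y j ^ 2 ≤ r ^ 2} with hT
  have hTmeas : MeasurableSet T := by
    apply measurableSet_le _ measurable_const
    exact Finset.measurable_sum _ fun j _ => (measurable_pi_apply j).pow_const 2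
  -- T corresponds to the closed ball in Euclidean space
  have hTvol : volume T =
      volume (Metric.closedBall (0 : EuclideanSpace ℝ (Fin (m + 1))) r) := by
    have hpre : T = (MeasurableEquiv.toLp 2 (Fin (m + 1) → ℝ)) ⁻¹'
        (Metric.closedBall (0 : EuclideanSpace ℝ (Fin (m + 1))) r) := by
      ext y
      simp only [hT, Set.mem_setOf_eq, Set.mem_preimage, Metric.mem_closedBall,
        dist_zero_right]
      have hnorm : ‖(MeasurableEquiv.toLp 2 (Fin (m + 1) → ℝ)) y‖ =
          Real.sqrt (∑ j, y j ^ 2) := by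
        rw [EuclideanSpace.norm_eq]
        simp only [Real.norm_eq_abs, sq_abs]
        rfl
      rw [hnorm, Real.sqrt_le_left hr]
    rw [hpre]
    exact ((EuclideanSpace.volume_preserving_symm_measurableEquiv_toLp (Fin (m + 1))).symm).measure_preimage
      measurableSet_closedBall.nullMeasurableSet
  -- the composite measure preserving map
  have e1 := EuclideanSpace.volume_preserving_symm_measurableEquiv_toLp (Fin (m + 2))
  have e2 := volume_preserving_piFinSuccAbove (fun _ : Fin (m + 2) => ℝ) 0
  have ecomp := e2.comp e1
  have hpre : {x : EuclideanSpace ℝ (Fin (m + 2)) |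
        (a ≤ x 0 ∧ x 0 ≤ b) ∧
          ∑ j : Fin (m + 1), x ((0 : Fin (m + 2)).succAbove j) ^ 2 ≤ r ^ 2} =
      ((MeasurableEquiv.piFinSuccAbove (fun _ : Fin (m + 2) => ℝ) 0) ∘
        (MeasurableEquiv.toLp 2 (Fin (m + 2) → ℝ)).symm) ⁻¹' (Set.Icc a b ×ˢ T) := by
    ext x
    simp only [Set.mem_setOf_eq, Set.mem_preimage, Function.comp_apply, Set.mem_prod,
      Set.mem_Icc, MeasurableEquiv.piFinSuccAbove_apply, hT]
    rfl
  rw [hpre, ecomp.measure_preimage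
    ((measurableSet_Icc.prod hTmeas).nullMeasurableSet)]
  rw [show (volume : Measure (ℝ × (Fin (m + 1) → ℝ))) = (volume : Measure ℝ).prod volume from rfl]
  rw [Measure.prod_prod, Real.volume_Icc, hTvol]

end CapAux

set_option maxHeartbeats 1600000 in
/-- For `d ≥ 2` and `δ ∈ (0,1)`, the ratio of the volume of the spherical
cap `A = {x : ‖x‖ ≤ 1, x₁ ≥ δ}` to the volume of the upper half ball
`H = {x : ‖x‖ ≤ 1, x₁ ≥ 0}` is at least
`((1−δ)^{(d+1)/2} / (√π (d+1))) · Γ(d/2 + 1)/Γ(d/2 + 1/2)`. -/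
theorem cap_volume_ratio_lower_bound (d : ℕ) (hd : 2 ≤ d)
    (δ : ℝ) (hδ : δ ∈ Set.Ioo (0 : ℝ) 1) :
    (volume {x : EuclideanSpace ℝ (Fin d) | ‖x‖ ≤ 1 ∧ δ ≤ x ⟨0, by omega⟩}).toReal /
      (volume {x : EuclideanSpace ℝ (Fin d) | ‖x‖ ≤ 1 ∧ 0 ≤ x ⟨0, by omega⟩}).toReal ≥
    ((1 - δ) ^ (((d : ℝ) + 1) / 2) / (Real.sqrt Real.pi * ((d : ℝ) + 1))) *
      (Real.Gamma ((d : ℝ) / 2 + 1) / Real.Gamma ((d : ℝ) / 2 + 1 / 2)) := by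
  obtain ⟨m, rfl⟩ : ∃ m, d = m + 2 := ⟨d - 2, by omega⟩
  obtain ⟨hδ0, hδ1⟩ := hδ
  have hidx : ∀ (h : 0 < m + 2), (⟨0, h⟩ : Fin (m + 2)) = 0 := by
    intro h; ext; simp
  simp only [hidx]
  have h1δ : (0 : ℝ) < 1 - δ := by linarith
  have hm3 : (0 : ℝ) < (m : ℝ) + 3 := by positivity
  set c : ℝ := δ + (1 - δ) / ((m : ℝ) + 3) with hcdef
  have hδc : δ < c := by
    have : 0 < (1 - δ) / ((m : ℝ) + 3) := by positivity
    simp only [hcdef]; linarith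
  have hc0 : 0 < c := hδ0.trans hδc
  have hc1 : c < 1 := by
    have h1 : (1 - δ) / ((m : ℝ) + 3) < 1 - δ := by
      rw [div_lt_iff₀ hm3]; nlinarith
    simp only [hcdef]; linarith
  have h1c : 1 - c = (1 - δ) * (((m : ℝ) + 2) / ((m : ℝ) + 3)) := by
    simp only [hcdef]; field_simp; ring
  have h1c2 : 0 < 1 - c ^ 2 := by nlinarith
  set r : ℝ := Real.sqrt (1 - c ^ 2) with hrdef
  have hr0 : 0 ≤ r := Real.sqrt_nonneg _
  have hr2 : r ^ 2 = 1 - c ^ 2 := Real.sq_sqrt h1c2.le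
  -- the three sets
  set A := {x : EuclideanSpace ℝ (Fin (m + 2)) | ‖x‖ ≤ 1 ∧ δ ≤ x 0} with hA
  set H := {x : EuclideanSpace ℝ (Fin (m + 2)) | ‖x‖ ≤ 1 ∧ 0 ≤ x 0} with hH
  set S := {x : EuclideanSpace ℝ (Fin (m + 2)) |
      (δ ≤ x 0 ∧ x 0 ≤ c) ∧
        ∑ j : Fin (m + 1), x ((0 : Fin (m + 2)).succAbove j) ^ 2 ≤ r ^ 2} with hS
  have hnorm_eq : ∀ x : EuclideanSpace ℝ (Fin (m + 2)),
      ‖x‖ = Real.sqrt (∑ i, x i ^ 2) := by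
    intro x
    rw [EuclideanSpace.norm_eq]
    simp only [Real.norm_eq_abs, sq_abs]
  have hSA : S ⊆ A := by
    rintro x ⟨⟨h1, h2⟩, h3⟩
    refine ⟨?_, h1⟩
    have hsum : ∑ i, x i ^ 2 ≤ 1 := by
      rw [Fin.sum_univ_succAbove (fun i => x i ^ 2) 0]
      have hx0 : x 0 ^ 2 ≤ c ^ 2 := by nlinarith
      rw [hr2] at h3
      linarith
    rw [hnorm_eq x, show (1 : ℝ) = Real.sqrt 1 by simp]
    exact Real.sqrt_le_sqrt hsum
  have hAball : A ⊆ Metric.closedBall 0 1 := by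
    rintro x ⟨h1, _⟩
    simpa [Metric.mem_closedBall, dist_zero_right] using h1
  -- volume computations
  have hvolS : volume S = ENNReal.ofReal (c - δ) *
      volume (Metric.closedBall (0 : EuclideanSpace ℝ (Fin (m + 1))) r) :=
    capaux_cylinder_vol m δ c r hr0
  have hvolH : 2 * volume H =
      volume (Metric.closedBall (0 : EuclideanSpace ℝ (Fin (m + 2))) 1) :=
    capaux_half_ball m 0
  have hball1 : volume (Metric.closedBall (0 : EuclideanSpace ℝ (Fin (m + 1))) r) =
      (ENNReal.ofReal r) ^ (m + 1) *
        ENNReal.ofReal (Real.sqrt Real.pi ^ (m + 1) /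
          Real.Gamma (((m : ℝ) + 1) / 2 + 1)) := by
    rw [EuclideanSpace.volume_closedBall]
    norm_num [Fintype.card_fin]
  have hball2 : volume (Metric.closedBall (0 : EuclideanSpace ℝ (Fin (m + 2))) 1) =
      ENNReal.ofReal (Real.sqrt Real.pi ^ (m + 2) /
        Real.Gamma (((m : ℝ) + 2) / 2 + 1)) := by
    rw [EuclideanSpace.volume_closedBall]
    norm_num [Fintype.card_fin]
  have hs : (0 : ℝ) < Real.sqrt Real.pi := Real.sqrt_pos.2 Real.pi_pos
  have hG1 : (0 : ℝ) < Real.Gamma (((m : ℝ) + 1) / 2 + 1) :=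
    Real.Gamma_pos_of_pos (by positivity)
  have hG2 : (0 : ℝ) < Real.Gamma (((m : ℝ) + 2) / 2 + 1) :=
    Real.Gamma_pos_of_pos (by positivity)
  -- toReal versions
  have hHval : (volume H).toReal =
      (Real.sqrt Real.pi ^ (m + 2) / Real.Gamma (((m : ℝ) + 2) / 2 + 1)) / 2 := by
    have h2 : volume H =
        ENNReal.ofReal (Real.sqrt Real.pi ^ (m + 2) /
          Real.Gamma (((m : ℝ) + 2) / 2 + 1)) / 2 := by
      rw [ENNReal.eq_div_iff two_ne_zero ENNReal.ofNat_ne_top, hvolH, hball2]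
    rw [h2, ENNReal.toReal_div, ENNReal.toReal_ofReal (by positivity)]
    norm_num
  have hSval : (volume S).toReal =
      (c - δ) * (r ^ (m + 1) *
        (Real.sqrt Real.pi ^ (m + 1) / Real.Gamma (((m : ℝ) + 1) / 2 + 1))) := by
    rw [hvolS, hball1, ENNReal.toReal_mul, ENNReal.toReal_mul, ENNReal.toReal_pow,
      ENNReal.toReal_ofReal (by linarith : (0:ℝ) ≤ c - δ), ENNReal.toReal_ofReal hr0,
      ENNReal.toReal_ofReal (by positivity)]
  have hHpos : 0 < (volume H).toReal := by
    rw [hHval]; positivity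
  -- finiteness of volume A
  have hAtop : volume A ≠ ⊤ := by
    refine (lt_of_le_of_lt (measure_mono hAball) measure_closedBall_lt_top).ne
  have hStop : volume S ≠ ⊤ := by
    refine (lt_of_le_of_lt (measure_mono (hSA.trans hAball)) measure_closedBall_lt_top).ne
  have hmono : (volume S).toReal ≤ (volume A).toReal :=
    ENNReal.toReal_le_toReal hStop hAtop |>.mpr (measure_mono hSA)
  rw [ge_iff_le]
  have hmain : ((1 - δ) ^ ((((m : ℕ) : ℝ) + 2 + 1) / 2) /
        (Real.sqrt Real.pi * (((m : ℕ) : ℝ) + 2 + 1))) *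
      (Real.Gamma ((((m : ℕ) : ℝ) + 2) / 2 + 1) /
        Real.Gamma ((((m : ℕ) : ℝ) + 2) / 2 + 1 / 2)) ≤
      (volume S).toReal / (volume H).toReal := by
    rw [hSval, hHval]
    -- rewrite the Gamma in the denominator
    have hGeq : Real.Gamma (((m : ℝ) + 2) / 2 + 1 / 2) =
        Real.Gamma (((m : ℝ) + 1) / 2 + 1) := by
      congr 1; ring
    rw [hGeq]
    -- key inequality
    have hcd : c - δ = (1 - δ) / ((m : ℝ) + 3) := by simp only [hcdef]; ring
    have hkey : (1 - δ) ^ (((m : ℝ) + 3) / 2) / (2 * ((m : ℝ) + 3)) ≤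
        (c - δ) * r ^ (m + 1) := by
      -- lower bound on r
      set q : ℝ := ((m : ℝ) + 2) / ((m : ℝ) + 3) with hqdef
      have hq0 : 0 < q := by positivity
      have hq1 : q ≤ 1 := by
        rw [hqdef, div_le_one hm3]; linarith
      have hrlow : Real.sqrt ((1 - δ) * q) ≤ r := by
        apply Real.sqrt_le_sqrt
        nlinarith
      have hsplit : Real.sqrt ((1 - δ) * q) =
          Real.sqrt (1 - δ) * Real.sqrt q := Real.sqrt_mul h1δ.le q
      have hrpow : (Real.sqrt (1 - δ) * Real.sqrt q) ^ (m + 1) ≤ r ^ (m + 1) := by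
        apply pow_le_pow_left₀ (by positivity)
        rw [← hsplit]; exact hrlow
      -- bound on q power
      have hq4 : (1 : ℝ) / 4 ≤ q ^ (m + 1) := by
        have hzpos : (0 : ℝ) < ((m : ℝ) + 3) / ((m : ℝ) + 2) := by positivity
        have he1 : ((m : ℝ) + 3) / ((m : ℝ) + 2) ≤ Real.exp (1 / ((m : ℝ) + 2)) := by
          have h := Real.add_one_le_exp (1 / ((m : ℝ) + 2))
          have : ((m : ℝ) + 3) / ((m : ℝ) + 2) = 1 / ((m : ℝ) + 2) + 1 := by
            field_simp
            ring
          rw [this]; exact h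
        have he2 : (((m : ℝ) + 3) / ((m : ℝ) + 2)) ^ (m + 1) ≤
            Real.exp (1 / ((m : ℝ) + 2)) ^ (m + 1) :=
          pow_le_pow_left₀ hzpos.le he1 (m + 1)
        have he3 : Real.exp (1 / ((m : ℝ) + 2)) ^ (m + 1) =
            Real.exp (((m : ℝ) + 1) / ((m : ℝ) + 2)) := by
          rw [← Real.exp_nat_mul]
          congr 1
          push_cast
          ring
        have he4 : Real.exp (((m : ℝ) + 1) / ((m : ℝ) + 2)) ≤ Real.exp 1 := by
          apply Real.exp_le_exp.2
          rw [div_le_one (by positivity)]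
          linarith
        have he5 : Real.exp 1 ≤ 4 := by
          have := Real.exp_one_lt_d9
          linarith
        have hz4 : (((m : ℝ) + 3) / ((m : ℝ) + 2)) ^ (m + 1) ≤ 4 := by
          calc (((m : ℝ) + 3) / ((m : ℝ) + 2)) ^ (m + 1) ≤
              Real.exp (1 / ((m : ℝ) + 2)) ^ (m + 1) := he2
            _ = Real.exp (((m : ℝ) + 1) / ((m : ℝ) + 2)) := he3
            _ ≤ Real.exp 1 := he4
            _ ≤ 4 := he5
        have hqinv : q = (((m : ℝ) + 3) / ((m : ℝ) + 2))⁻¹ := by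
          rw [hqdef]; field_simp
        rw [hqinv, inv_pow]
        have hzp : (0:ℝ) < (((m : ℝ) + 3) / ((m : ℝ) + 2)) ^ (m + 1) := pow_pos hzpos _
        have hinv : (0:ℝ) ≤ ((((m : ℝ) + 3) / ((m : ℝ) + 2)) ^ (m + 1))⁻¹ := by positivity
        nlinarith [mul_inv_cancel₀ hzp.ne', hz4, hinv]
      have hsq2 : (1 : ℝ) / 2 ≤ Real.sqrt q ^ (m + 1) := by
        have ht0 : (0:ℝ) ≤ Real.sqrt q ^ (m + 1) := by positivity
        have ht2 : (Real.sqrt q ^ (m + 1)) ^ 2 = q ^ (m + 1) := by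
          rw [← pow_mul, mul_comm, pow_mul, Real.sq_sqrt hq0.le]
        nlinarith [ht0, ht2, hq4]
      -- the rpow identity
      have hX : (1 - δ) ^ (((m : ℝ) + 3) / 2) =
          (1 - δ) * Real.sqrt (1 - δ) ^ (m + 1) := by
        have e1 : (1 - δ) ^ (((m : ℝ) + 3) / 2) =
            (1 - δ) ^ ((1 : ℝ) + (1 / 2) * (((m : ℕ) : ℝ) + 1)) := by
          congr 1
          push_cast
          ring
        rw [e1, Real.rpow_add h1δ, Real.rpow_one, Real.rpow_mul h1δ.le,
          ← Real.sqrt_eq_rpow]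
        congr 1
        rw [show (((m : ℕ) : ℝ) + 1) = (((m + 1 : ℕ) : ℝ)) by push_cast; ring,
          Real.rpow_natCast]
      rw [hX, hcd]
      calc (1 - δ) * Real.sqrt (1 - δ) ^ (m + 1) / (2 * ((m : ℝ) + 3)) =
          (1 - δ) / ((m : ℝ) + 3) *
            (Real.sqrt (1 - δ) ^ (m + 1) * Real.sqrt q ^ (m + 1)) /
              (Real.sqrt q ^ (m + 1) * 2) := by
            field_simp
        _ ≤ (1 - δ) / ((m : ℝ) + 3) *
            (Real.sqrt (1 - δ) ^ (m + 1) * Real.sqrt q ^ (m + 1)) := by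
            apply div_le_self (by positivity)
            nlinarith [hsq2]
        _ = (1 - δ) / ((m : ℝ) + 3) *
            (Real.sqrt (1 - δ) * Real.sqrt q) ^ (m + 1) := by
            rw [mul_pow]
        _ ≤ (1 - δ) / ((m : ℝ) + 3) * r ^ (m + 1) := by
            apply mul_le_mul_of_nonneg_left hrpow (by positivity)
    -- assemble
    push_cast
    have hLHS : (1 - δ) ^ (((m : ℝ) + 2 + 1) / 2) /
          (Real.sqrt Real.pi * ((m : ℝ) + 2 + 1)) *
        (Real.Gamma (((m : ℝ) + 2) / 2 + 1) / Real.Gamma (((m : ℝ) + 1) / 2 + 1)) =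
        ((1 - δ) ^ (((m : ℝ) + 3) / 2) / (2 * ((m : ℝ) + 3))) *
          (2 * Real.Gamma (((m : ℝ) + 2) / 2 + 1) /
            (Real.sqrt Real.pi * Real.Gamma (((m : ℝ) + 1) / 2 + 1))) := by
      rw [show ((m : ℝ) + 2 + 1) / 2 = ((m : ℝ) + 3) / 2 by ring]
      field_simp
      ring
    have hRHS : (c - δ) * (r ^ (m + 1) *
          (Real.sqrt Real.pi ^ (m + 1) / Real.Gamma (((m : ℝ) + 1) / 2 + 1))) /
        (Real.sqrt Real.pi ^ (m + 2) / Real.Gamma (((m : ℝ) + 2) / 2 + 1) / 2) =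
        ((c - δ) * r ^ (m + 1)) *
          (2 * Real.Gamma (((m : ℝ) + 2) / 2 + 1) /
            (Real.sqrt Real.pi * Real.Gamma (((m : ℝ) + 1) / 2 + 1))) := by
      rw [pow_succ]
      field_simp
      ring
    rw [hLHS, hRHS]
    apply mul_le_mul_of_nonneg_right hkey (by positivity)
  calc ((1 - δ) ^ ((((m + 2 : ℕ) : ℝ) + 1) / 2) /
        (Real.sqrt Real.pi * (((m + 2 : ℕ) : ℝ) + 1))) *
      (Real.Gamma (((m + 2 : ℕ) : ℝ) / 2 + 1) /
        Real.Gamma (((m + 2 : ℕ) : ℝ) / 2 + 1 / 2)) =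
      ((1 - δ) ^ ((((m : ℕ) : ℝ) + 2 + 1) / 2) /
        (Real.sqrt Real.pi * (((m : ℕ) : ℝ) + 2 + 1))) *
      (Real.Gamma ((((m : ℕ) : ℝ) + 2) / 2 + 1) /
        Real.Gamma ((((m : ℕ) : ℝ) + 2) / 2 + 1 / 2)) := by push_cast; ring_nf
    _ ≤ (volume S).toReal / (volume H).toReal := hmain
    _ ≤ (volume A).toReal / (volume H).toReal := by
        gcongr
end

section
/- Let θ̂¹, θ̂⁰, x ∈ ℝ^d and δ ≥ 0, and set β := θ̂¹ − θ̂⁰. Let x' ∈ ℝ^d satisfy the best-response property: ‖x' − x‖₂ ≤ δ, and if there exists y ∈ ℝ^d with ‖y − x‖₂ ≤ δ and ⟨β, y⟩ ≥ δ‖β‖₂, then ⟨β, x'⟩ ≥ δ‖β‖₂. Define the assigned action a := 1 if ⟨β, x'⟩ ≥ δ‖β‖₂ and a := 0 otherwise. Then for every a* ∈ {0,1}, ⟨θ̂^{a*} − θ̂^{a}, x⟩ ≤ 0, where θ̂^{1} := θ̂¹ and θ̂^{0} := θ̂⁰. -/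
open scoped RealInnerProductSpace
open Classical

/-- Key lemma of the regret decomposition. If the agent best-responds to the
shifted linear policy with slope `β = θ̂¹ − θ̂⁰` (moving within budget `δ` and crossing the
threshold `δ‖β‖` whenever feasible), and the assigned action is `a = 𝟙{⟨β, x'⟩ ≥ δ‖β‖}`,
then for every alternative action `a*`, `⟨θ̂^{a*} − θ̂^{a}, x⟩ ≤ 0` on the true context `x`.
Actions are encoded as `Bool` (`true = 1`, `false = 0`). -/
theorem assigned_action_empirical_score_dominates {d : ℕ}
    (θhat1 θhat0 x x' : EuclideanSpace ℝ (Fin d)) (δ : ℝ) (hδ : 0 ≤ δ)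
    (hbudget : ‖x' - x‖ ≤ δ)
    (hbr : (∃ y : EuclideanSpace ℝ (Fin d), ‖y - x‖ ≤ δ ∧
        δ * ‖θhat1 - θhat0‖ ≤ ⟪θhat1 - θhat0, y⟫) →
      δ * ‖θhat1 - θhat0‖ ≤ ⟪θhat1 - θhat0, x'⟫)
    (a : Bool)
    (ha : a = if δ * ‖θhat1 - θhat0‖ ≤ ⟪θhat1 - θhat0, x'⟫ then true else false)
    (astar : Bool) :
    ⟪(if astar then θhat1 else θhat0) - (if a then θhat1 else θhat0), x⟫ ≤ 0 := by
  set β := θhat1 - θhat0 with hβ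
  by_cases hth : δ * ‖β‖ ≤ ⟪β, x'⟫
  · -- a = true
    have ha' : a = true := by rw [ha, if_pos hth]
    subst ha'
    cases astar with
    | true => simp
    | false =>
      -- need ⟪θ0 - θ1, x⟫ ≤ 0, i.e. 0 ≤ ⟪β, x⟫
      have h1 : ⟪β, x' - x⟫ ≤ ‖β‖ * ‖x' - x‖ := real_inner_le_norm β (x' - x)
      have h2 : ‖β‖ * ‖x' - x‖ ≤ ‖β‖ * δ :=
        mul_le_mul_of_nonneg_left hbudget (norm_nonneg β)
      have h3 : ⟪β, x⟫ = ⟪β, x'⟫ - ⟪β, x' - x⟫ := by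
        rw [inner_sub_right]; ring
      have h4 : 0 ≤ ⟪β, x⟫ := by
        rw [h3]; nlinarith
      simp only [if_false, if_true, Bool.false_eq_true]
      have : θhat0 - θhat1 = -β := by rw [hβ]; abel
      rw [this, inner_neg_left]
      linarith
  · -- a = false
    have ha' : a = false := by rw [ha, if_neg hth]
    subst ha'
    cases astar with
    | false => simp
    | true =>
      -- need ⟪β, x⟫ ≤ 0
      by_cases hb : β = 0
      · exact absurd (by simp [hb]) hth
      · -- Take y = x + (δ/‖β‖) • β; feasibility then contradiction unless ⟪β,x⟫ < 0
        have hnb : 0 < ‖β‖ := norm_pos_iff.mpr hb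
        have key : ¬ (δ * ‖β‖ ≤ ⟪β, x + (δ / ‖β‖) • β⟫) := by
          intro h
          exact hth (hbr ⟨x + (δ / ‖β‖) • β, by
            simp [norm_smul, abs_of_nonneg (div_nonneg hδ hnb.le),
              div_mul_cancel₀ δ hnb.ne', abs_of_nonneg hδ], h⟩)
        have hy : ⟪β, x + (δ / ‖β‖) • β⟫ = ⟪β, x⟫ + δ * ‖β‖ := by
          rw [inner_add_right, inner_smul_right, real_inner_self_eq_norm_sq]
          field_simp
        rw [hy] at key
        push_neg at key
        simp only [if_true, Bool.false_eq_true, if_false]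
        linarith
end
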